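/- For all non-negative integers n, the number of pairs of overpartitions (λ¹, λ²) with |λ¹|+|λ²| = 3n+2 is divisible by 3. -/

import Mathlib

/-- A multiset of natural numbers represents a partition if all parts are positive. -/
def IsPartitionM (m : Multiset ℕ) : Prop := ∀ i ∈ m, 0 < i

/-- A partition all of whose parts are even (and positive). -/
def IsEvenPartition (m : Multiset ℕ) : Prop := IsPartitionM m ∧ ∀ i ∈ m, Even i

/-- A staircase partition: parts k, k-1, ..., 2, 1 (possibly empty). -/
def IsStaircase (m : Multiset ℕ) : Prop := ∃ k : ℕ, m = (Multiset.range k).map (· + 1)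

/-- An odd staircase: parts 2k-1, 2k-3, ..., 3, 1 (possibly empty); its size is k². -/
def IsOddStaircase (m : Multiset ℕ) : Prop := ∃ k : ℕ, m = (Multiset.range k).map (fun i => 2 * i + 1)

/-- A partition into distinct odd parts. -/
def IsDistinctOdd (m : Multiset ℕ) : Prop := m.Nodup ∧ ∀ i ∈ m, Odd i

/-- A partition whose odd parts are distinct (even parts unrestricted). -/
def IsPOD (m : Multiset ℕ) : Prop := IsPartitionM m ∧ ∀ i ∈ m, Odd i → m.count i ≤ 1

/-- A partition into distinct parts, all divisible by 3. -/
def IsDistinctMul3 (m : Multiset ℕ) : Prop := IsPartitionM m ∧ m.Nodup ∧ ∀ i ∈ m, 3 ∣ i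

/-- An overpartition: a partition together with a set of overlined part sizes,
each of which must occur in the partition. -/
def IsOverpartition (x : Multiset ℕ × Finset ℕ) : Prop :=
  IsPartitionM x.1 ∧ ∀ s ∈ x.2, s ∈ x.1

/-- A partition with designated summands: a partition together with, for each part size
occurring with multiplicity `c`, a choice of designated occurrence in `{1, ..., c}`
(and `0` for non-occurring sizes). -/
def IsDesignated (x : Multiset ℕ × (ℕ → ℕ)) : Prop :=
  IsPartitionM x.1 ∧ ∀ s : ℕ,
    (0 < x.1.count s → 1 ≤ x.2 s ∧ x.2 s ≤ x.1.count s) ∧ (x.1.count s = 0 → x.2 s = 0)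


namespace OPC
open PowerSeries Finset

abbrev R3 := ZMod 3
abbrev S := PowerSeries R3

open PowerSeries Finset


instance : Fact (Nat.Prime 3) := ⟨by norm_num⟩
instance : CharP S 3 := charP_of_injective_ringHom (PowerSeries.C_injective (R := R3)) 3

/-! ### coefficient helpers -/

lemma coeff_X_pow_mul' (F : S) (a m : ℕ) :
    (coeff m) ((X : S) ^ a * F) = if a ≤ m then coeff (m - a) F else 0 := by
  split_ifs with h
  · obtain ⟨d, rfl⟩ : ∃ d, m = d + a := ⟨m - a, by omega⟩
    rw [PowerSeries.coeff_X_pow_mul]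
    have hd : d + a - a = d := by omega
    rw [hd]
  · rw [PowerSeries.coeff_mul]
    apply Finset.sum_eq_zero
    rintro ⟨p, q⟩ hp
    rw [Finset.HasAntidiagonal.mem_antidiagonal] at hp
    have : p ≠ a := by omega
    simp [PowerSeries.coeff_X_pow, this]

/-! ### OneUpTo -/

/-- `F` agrees with `1` in all coefficients up to `n`. -/
def OneUpTo (n : ℕ) (F : S) : Prop :=
  ∀ m ≤ n, coeff m F = if m = 0 then 1 else 0

lemma OneUpTo.mul {n : ℕ} {F G : S} (hF : OneUpTo n F) (hG : OneUpTo n G) :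
    OneUpTo n (F * G) := by
  intro m hm
  rw [PowerSeries.coeff_mul]
  rcases Nat.eq_zero_or_pos m with rfl | hpos
  · simp only [Finset.Nat.antidiagonal_zero, Finset.sum_singleton]
    rw [hF 0 (by omega), hG 0 (by omega)]
    simp
  · have hm0 : ¬ (m = 0) := by omega
    rw [if_neg hm0]
    apply Finset.sum_eq_zero
    rintro ⟨p, q⟩ hp
    rw [Finset.HasAntidiagonal.mem_antidiagonal] at hp
    rw [hF p (by omega), hG q (by omega)]
    have : p ≠ 0 ∨ q ≠ 0 := by omega
    rcases this with h | h
    · rw [if_neg h]; ring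
    · rw [if_neg h]; ring

lemma OneUpTo.one (n : ℕ) : OneUpTo n 1 := by
  intro m hm; rw [PowerSeries.coeff_one]

lemma oneUpTo_one_sub_pow {n k : ℕ} (h : n < k) : OneUpTo n (1 - (X : S) ^ k) := by
  intro m hm
  have hk : m ≠ k := by omega
  rw [map_sub, PowerSeries.coeff_one, PowerSeries.coeff_X_pow, if_neg hk, sub_zero]

lemma OneUpTo.prod {n : ℕ} {s : Finset ℕ} {f : ℕ → S}
    (h : ∀ i ∈ s, OneUpTo n (f i)) : OneUpTo n (∏ i ∈ s, f i) := by
  classical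
  induction s using Finset.induction_on with
  | empty => simpa using OneUpTo.one n
  | insert a t hx ih =>
    rw [Finset.prod_insert hx]
    exact (h a (Finset.mem_insert_self a t)).mul
      (ih fun i hi => h i (Finset.mem_insert_of_mem hi))

/-! ### TendsTo : coefficientwise stabilization at rate `n ≥ m` -/

def TendsTo (F : ℕ → S) (L : S) : Prop :=
  ∀ m : ℕ, ∀ n ≥ m, coeff m (F n) = coeff m L

lemma TendsTo.mul {F G : ℕ → S} {L M : S} (hF : TendsTo F L) (hG : TendsTo G M) :
    TendsTo (fun n => F n * G n) (L * M) := by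
  intro m n hn
  rw [PowerSeries.coeff_mul, PowerSeries.coeff_mul]
  apply Finset.sum_congr rfl
  rintro ⟨p, q⟩ hp
  rw [Finset.HasAntidiagonal.mem_antidiagonal] at hp
  rw [hF p n (by omega), hG q n (by omega)]

lemma TendsTo.unique {F : ℕ → S} {L M : S} (hL : TendsTo F L) (hM : TendsTo F M) :
    L = M := by
  ext m
  rw [← hL m m le_rfl, hM m m le_rfl]

lemma TendsTo.congr {F G : ℕ → S} {L : S} (h : ∀ n, F n = G n) (hF : TendsTo F L) :
    TendsTo G L := fun m n hn => (h n) ▸ hF m n hn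

/-! ### Frobenius: coefficients of cubes are supported on multiples of 3 -/

lemma shape (f : S) :
    f = C (constantCoeff f) + X * PowerSeries.mk (fun n => coeff (n + 1) f) := by
  ext m
  cases m with
  | zero =>
      simp [PowerSeries.coeff_zero_eq_constantCoeff, map_add, map_mul]
  | succ m =>
      rw [map_add, PowerSeries.coeff_C, if_neg (by omega), PowerSeries.coeff_succ_X_mul]
      simp

lemma coeff_cube_eq_zero : ∀ (j : ℕ), ¬ (3 ∣ j) → ∀ (f : S), coeff j (f ^ 3) = 0 := by
  intro j
  induction j using Nat.strong_induction_on with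
  | _ j ih =>
    intro hj f
    have hdecomp := shape f
    set a := constantCoeff f with ha
    set g := PowerSeries.mk (fun n => coeff (n + 1) f) with hg
    have hcube : f ^ 3 = C (a ^ 3) + (X : S) ^ 3 * g ^ 3 := by
      rw [hdecomp]
      rw [add_pow_char (p := 3)]
      rw [mul_pow, map_pow]
    have hj0 : ¬ (j = 0) := by omega
    rw [hcube, map_add, PowerSeries.coeff_C, if_neg hj0, coeff_X_pow_mul']
    split_ifs with h3
    · rw [ih (j - 3) (by omega) (by omega) g]; ring
    · ring


open PowerSeries Finset


/-! ### Gaussian binomials (with generic "variable" Y) -/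

noncomputable def qb (Y : S) : ℕ → ℤ → S
  | 0, k => if k = 0 then 1 else 0
  | (m + 1), k => qb Y m k + Y ^ (((m : ℤ) + 1 - k).toNat) * qb Y m (k - 1)

lemma qb_zero_def (Y : S) (k : ℤ) : qb Y 0 k = if k = 0 then 1 else 0 := rfl

lemma qb_succ_def (Y : S) (m : ℕ) (k : ℤ) :
    qb Y (m + 1) k = qb Y m k + Y ^ (((m : ℤ) + 1 - k).toNat) * qb Y m (k - 1) := rfl

lemma qb_neg (Y : S) : ∀ (m : ℕ) (k : ℤ), k < 0 → qb Y m k = 0 := by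
  intro m
  induction m with
  | zero => intro k hk; rw [qb_zero_def, if_neg (by omega)]
  | succ m ih =>
    intro k hk
    rw [qb_succ_def, ih k hk, ih (k - 1) (by omega)]
    ring

lemma qb_gt (Y : S) : ∀ (m : ℕ) (k : ℤ), (m : ℤ) < k → qb Y m k = 0 := by
  intro m
  induction m with
  | zero => intro k hk; rw [qb_zero_def, if_neg (by omega)]
  | succ m ih =>
    intro k hk
    have h1 : (m : ℤ) < k := by push_cast at hk ⊢; omega
    have h2 : (m : ℤ) < k - 1 := by push_cast at hk ⊢; omega
    rw [qb_succ_def, ih k h1, ih (k - 1) h2]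
    ring

lemma qb_zero (Y : S) : ∀ (m : ℕ), qb Y m 0 = 1 := by
  intro m
  induction m with
  | zero => rw [qb_zero_def, if_pos rfl]
  | succ m ih =>
    rw [qb_succ_def, ih, qb_neg Y m (0 - 1) (by omega)]
    ring

lemma qb_self (Y : S) : ∀ (m : ℕ), qb Y m (m : ℤ) = 1 := by
  intro m
  induction m with
  | zero => rw [Nat.cast_zero, qb_zero_def, if_pos rfl]
  | succ m ih =>
    rw [qb_succ_def]
    have h1 : ((m : ℤ) + 1 - ((m + 1 : ℕ) : ℤ)).toNat = 0 := by push_cast; omega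
    have h2 : ((m + 1 : ℕ) : ℤ) - 1 = (m : ℤ) := by push_cast; ring
    have h3 : qb Y m ((m + 1 : ℕ) : ℤ) = 0 := qb_gt Y m _ (by push_cast; omega)
    rw [h1, h2, h3, ih]
    simp

lemma qb_pascal2 (Y : S) : ∀ (m : ℕ) (k : ℤ),
    qb Y (m + 1) k = Y ^ (k.toNat) * qb Y m k + qb Y m (k - 1) := by
  intro m
  induction m with
  | zero =>
    intro k
    rw [qb_succ_def, qb_zero_def, qb_zero_def]
    by_cases h0 : k = 0
    · subst h0; simp
    · by_cases h1 : k = 1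
      · subst h1
        have e2 : (1 : ℤ) - 1 = 0 := by ring
        rw [if_neg h0, e2, if_pos rfl]
        norm_num
      · have h2 : ¬ (k - 1 = 0) := by omega
        rw [if_neg h0, if_neg h2]
        ring
  | succ m ih =>
    intro k
    rcases le_or_gt k 0 with hk | hk
    · rcases eq_or_lt_of_le hk with rfl | hk2
      · rw [qb_zero, qb_zero, qb_neg Y (m + 1) (0 - 1) (by omega)]
        simp
      · rw [qb_neg Y (m + 2) k hk2, qb_neg Y (m + 1) k hk2,
          qb_neg Y (m + 1) (k - 1) (by omega)]
        ring
    · rcases le_or_gt k ((m : ℤ) + 1) with hk2 | hk2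
      · -- main case 1 ≤ k ≤ m+1
        have hL : qb Y (m + 1 + 1) k =
            (Y ^ k.toNat * qb Y m k + qb Y m (k - 1)) +
            Y ^ (((m : ℤ) + 1 + 1 - k).toNat) *
              (Y ^ ((k - 1).toNat) * qb Y m (k - 1) + qb Y m (k - 1 - 1)) := by
          rw [qb_succ_def Y (m + 1) k, ih k, ih (k - 1)]
          push_cast
          ring_nf
        have hR1 : qb Y (m + 1) k = qb Y m k + Y ^ (((m : ℤ) + 1 - k).toNat) * qb Y m (k - 1) :=
          qb_succ_def Y m k
        have hR2 : qb Y (m + 1) (k - 1) =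
            qb Y m (k - 1) + Y ^ (((m : ℤ) + 1 + 1 - k).toNat) * qb Y m (k - 1 - 1) := by
          rw [qb_succ_def Y m (k - 1)]
          have : ((m : ℤ) + 1 - (k - 1)).toNat = ((m : ℤ) + 1 + 1 - k).toNat := by omega
          rw [this]
        rw [hL, hR1, hR2]
        have hpow : Y ^ (((m : ℤ) + 1 + 1 - k).toNat) * Y ^ ((k - 1).toNat) =
            Y ^ (k.toNat) * Y ^ (((m : ℤ) + 1 - k).toNat) := by
          rw [← pow_add, ← pow_add]
          congr 1
          omega
        calc Y ^ k.toNat * qb Y m k + qb Y m (k - 1) +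
              Y ^ (((m : ℤ) + 1 + 1 - k).toNat) *
                (Y ^ ((k - 1).toNat) * qb Y m (k - 1) + qb Y m (k - 1 - 1))
            = Y ^ k.toNat * qb Y m k + qb Y m (k - 1) +
              (Y ^ (((m : ℤ) + 1 + 1 - k).toNat) * Y ^ ((k - 1).toNat)) * qb Y m (k - 1) +
              Y ^ (((m : ℤ) + 1 + 1 - k).toNat) * qb Y m (k - 1 - 1) := by ring
          _ = _ := by rw [hpow]; ring
      · -- k ≥ m + 2
        rcases eq_or_lt_of_le (show (m : ℤ) + 2 ≤ k by omega) with heq | hk3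
        · have hc2 : k - 1 = ((m + 1 : ℕ) : ℤ) := by push_cast; omega
          have e0 : (((m + 1 : ℕ) : ℤ) + 1 - k).toNat = 0 := by push_cast; omega
          rw [qb_succ_def Y (m + 1) k, e0, qb_gt Y (m + 1) k (by push_cast; omega), hc2, qb_self]
          simp
        · rw [qb_gt Y (m + 2) k (by push_cast; omega), qb_gt Y (m + 1) k (by push_cast; omega),
            qb_gt Y (m + 1) (k - 1) (by push_cast; omega)]
          ring

lemma qb_symm (Y : S) : ∀ (m : ℕ) (k : ℤ), qb Y m k = qb Y m ((m : ℤ) - k) := by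
  intro m
  induction m with
  | zero =>
    intro k
    rw [qb_zero_def, qb_zero_def]
    by_cases h : k = 0
    · rw [if_pos h, if_pos (by omega)]
    · rw [if_neg h, if_neg (by omega)]
  | succ m ih =>
    intro k
    rw [qb_succ_def, ih k, ih (k - 1), qb_pascal2]
    have h1 : ((m : ℤ) - (k - 1)) = (m : ℤ) + 1 - k := by ring
    have h2 : (((m + 1 : ℕ) : ℤ) - k) = (m : ℤ) + 1 - k := by push_cast; ring
    have h3 : ((m : ℤ) + 1 - k - 1) = (m : ℤ) - k := by ring
    rw [h1, h2, h3]
    ring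

/-- helper : `Ioc (j-1) j = {j}` for `j ≥ 1`. -/
lemma Ioc_pred_self {j : ℕ} (hj : 0 < j) : Ioc (j - 1) j = {j} := by
  ext x
  simp only [Finset.mem_Ioc, Finset.mem_singleton]
  omega

/-- Closed form: `qb Y m k * ∏_{i=1}^{k} (1 - Y^i) = ∏_{i=j+1}^{m} (1 - Y^i)` when `k + j = m`. -/
lemma qb_closed (Y : S) : ∀ (m k j : ℕ), k + j = m →
    qb Y m (k : ℤ) * ∏ i ∈ Ioc 0 k, (1 - Y ^ i) = ∏ i ∈ Ioc j m, (1 - Y ^ i) := by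
  intro m
  induction m with
  | zero =>
    intro k j hkj
    have hk : k = 0 := by omega
    have hj : j = 0 := by omega
    subst hk; subst hj
    simp [qb_zero]
  | succ m ih =>
    intro k j hkj
    cases k with
    | zero =>
      have hj : j = m + 1 := by omega
      subst hj
      rw [Nat.cast_zero, qb_zero]
      simp
    | succ k =>
      rcases Nat.eq_zero_or_pos j with rfl | hj
      · have hk : k = m := by omega
        subst hk
        rw [qb_self, one_mul]
      · have hkj' : k + j = m := by omega
        have hk1m : (k + 1) + (j - 1) = m := by omega
        have hjm : j ≤ m := by omega
        have e1 : qb Y (m + 1) ((k + 1 : ℕ) : ℤ) =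
            qb Y m ((k + 1 : ℕ) : ℤ) + Y ^ j * qb Y m (k : ℤ) := by
          rw [qb_succ_def]
          have h1 : (((m : ℤ) + 1 - ((k + 1 : ℕ) : ℤ))).toNat = j := by push_cast; omega
          have h2 : ((k + 1 : ℕ) : ℤ) - 1 = (k : ℤ) := by push_cast; ring
          rw [h1, h2]
        have hsplit : ∏ i ∈ Ioc 0 (k + 1), (1 - Y ^ i) =
            (∏ i ∈ Ioc 0 k, (1 - Y ^ i)) * (1 - Y ^ (k + 1)) :=
          Finset.prod_Ioc_succ_top (by omega) _
        have hA := ih (k + 1) (j - 1) hk1m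
        have hB := ih k j hkj'
        have hsplitA : ∏ i ∈ Ioc (j - 1) m, (1 - Y ^ i) =
            (1 - Y ^ j) * ∏ i ∈ Ioc j m, (1 - Y ^ i) := by
          rw [← Finset.prod_Ioc_consecutive _ (show j - 1 ≤ j by omega) hjm]
          rw [Ioc_pred_self hj, Finset.prod_singleton]
        have hRHS : ∏ i ∈ Ioc j (m + 1), (1 - Y ^ i) =
            (∏ i ∈ Ioc j m, (1 - Y ^ i)) * (1 - Y ^ (m + 1)) :=
          Finset.prod_Ioc_succ_top hjm _
        rw [e1, add_mul, hsplit, hRHS]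
        rw [show qb Y m ((k + 1 : ℕ) : ℤ) * ((∏ i ∈ Ioc 0 k, (1 - Y ^ i)) * (1 - Y ^ (k + 1)))
            = (qb Y m ((k + 1 : ℕ) : ℤ) * ∏ i ∈ Ioc 0 (k + 1), (1 - Y ^ i)) from by
          rw [hsplit]]
        rw [hA, hsplitA]
        rw [show Y ^ j * qb Y m (k : ℤ) * ((∏ i ∈ Ioc 0 k, (1 - Y ^ i)) * (1 - Y ^ (k + 1)))
            = Y ^ j * (1 - Y ^ (k + 1)) * (qb Y m (k : ℤ) * ∏ i ∈ Ioc 0 k, (1 - Y ^ i)) from by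
          ring]
        rw [hB]
        have hfin : Y ^ j * Y ^ (k + 1) = Y ^ (m + 1) := by
          rw [← pow_add]
          congr 1
          omega
        rw [← hfin]
        ring


open PowerSeries Finset


-- placeholders from earlier sections

/-! ### two-step recurrence -/

lemma qb_two_step (Y : S) (m : ℕ) (k : ℤ) :
    qb Y (m + 2) k = Y ^ (k.toNat) * qb Y m k + (1 + Y ^ (m + 1)) * qb Y m (k - 1) +
      Y ^ (((m : ℤ) + 2 - k).toNat) * qb Y m (k - 2) := by
  have h0 : qb Y (m + 2) k =
      qb Y (m + 1) k + Y ^ ((((m + 1 : ℕ) : ℤ) + 1 - k).toNat) * qb Y (m + 1) (k - 1) :=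
    qb_succ_def Y (m + 1) k
  rw [h0, qb_pascal2 Y m k, qb_pascal2 Y m (k - 1)]
  have hE : ((((m + 1 : ℕ) : ℤ) + 1 - k).toNat) = (((m : ℤ) + 2 - k).toNat) := by
    push_cast; omega
  rw [hE]
  have hk12 : k - 1 - 1 = k - 2 := by ring
  rw [hk12]
  rcases le_or_gt k 0 with hk | hk
  · rw [qb_neg Y m (k - 1) (by omega)]
    ring
  · rcases le_or_gt k ((m : ℤ) + 2) with hk2 | hk2
    · have hpow : Y ^ (((m : ℤ) + 2 - k).toNat) * Y ^ ((k - 1).toNat) = Y ^ (m + 1) := by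
        rw [← pow_add]
        congr 1
        omega
      calc Y ^ k.toNat * qb Y m k + qb Y m (k - 1) +
            Y ^ (((m : ℤ) + 2 - k).toNat) * (Y ^ ((k - 1).toNat) * qb Y m (k - 1) + qb Y m (k - 2))
          = Y ^ k.toNat * qb Y m k +
            (1 + Y ^ (((m : ℤ) + 2 - k).toNat) * Y ^ ((k - 1).toNat)) * qb Y m (k - 1) +
            Y ^ (((m : ℤ) + 2 - k).toNat) * qb Y m (k - 2) := by ring
        _ = _ := by rw [hpow]
    · rw [qb_gt Y m (k - 1) (by omega)]
      ring

/-! ### dist exponent helpers -/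

lemma dist_sq_shift1 (i n : ℕ) :
    (Nat.dist i (n + 1)) ^ 2 + 2 * i = (Nat.dist i n) ^ 2 + (2 * n + 1) := by
  rcases le_or_gt i n with h | h
  · have d1 : Nat.dist i (n + 1) = (n - i) + 1 := by simp [Nat.dist]; omega
    have d2 : Nat.dist i n = n - i := by simp [Nat.dist]; omega
    rw [d1, d2]
    have hni : n - i + i = n := by omega
    nlinarith [hni]
  · have d1 : Nat.dist i (n + 1) = i - (n + 1) := by simp [Nat.dist]; omega
    have d2 : Nat.dist i n = i - n := by simp [Nat.dist]; omega
    rw [d1, d2]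
    have h1 : i - n = (i - (n + 1)) + 1 := by omega
    rw [h1]
    have h2 : (i - (n+1)) + (n+1) = i := by omega
    nlinarith [h2]

lemma dist_sq_shift2 (i n : ℕ) (hi : i ≤ 2 * n) :
    (Nat.dist (i + 2) (n + 1)) ^ 2 + 2 * (2 * n - i) = (Nat.dist i n) ^ 2 + (2 * n + 1) := by
  have hd : Nat.dist (i + 2) (n + 1) = Nat.dist (i + 1) n := Nat.dist_succ_succ
  rw [hd]
  rcases le_or_gt (i + 1) n with h | h
  · have d1 : Nat.dist (i + 1) n = n - (i + 1) := by simp [Nat.dist]; omega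
    have d2 : Nat.dist i n = n - i := by simp [Nat.dist]; omega
    rw [d1, d2]
    have h1 : n - i = (n - (i + 1)) + 1 := by omega
    rw [h1]
    have h2 : (n - (i+1)) + (i+1) = n := by omega
    have h3 : 2 * n - i = n + (n - (i + 1)) + 1 := by omega
    rw [h3]
    nlinarith [h2]
  · have d1 : Nat.dist (i + 1) n = (i + 1) - n := by simp [Nat.dist]; omega
    have d2 : Nat.dist i n = i - n := by simp [Nat.dist]; omega
    rw [d1, d2]
    have h1 : (i + 1) - n = (i - n) + 1 := by omega
    rw [h1]
    have h2 : (i - n) + n = i := by omega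
    have h3 : 2 * n - i = n - (i - n) := by omega
    have h4 : (n - (i - n)) + (i - n) = n := by omega
    rw [h3]
    nlinarith [h2, h4]


open PowerSeries Finset



noncomputable def gaussTerm (n i : ℕ) : S := (-1 : S) ^ (i + n) * (X : S) ^ ((Nat.dist i n) ^ 2)

noncomputable def gaussSum (n : ℕ) : S :=
  ∑ i ∈ range (2 * n + 1), gaussTerm n i * qb ((X : S) ^ 2) (2 * n) (i : ℤ)

lemma gaussTerm_succ (n i : ℕ) : gaussTerm (n + 1) (i + 1) = gaussTerm n i := by
  unfold gaussTerm
  have hd : Nat.dist (i + 1) (n + 1) = Nat.dist i n := Nat.dist_succ_succ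
  rw [hd, show (i + 1) + (n + 1) = (i + n) + 2 by ring, pow_add]
  norm_num

lemma gauss_rec (n : ℕ) :
    gaussSum (n + 1) = gaussSum n * (1 - (X : S) ^ (2 * n + 1)) ^ 2 := by
  set Y : S := (X : S) ^ 2 with hY
  have hYpow : Y ^ (2 * n + 1) = (X : S) ^ (4 * n + 2) := by
    rw [hY, ← pow_mul]; congr 1; ring
  -- the three partial sums
  have hsum : gaussSum (n + 1) =
      (∑ i ∈ range (2 * n + 3), gaussTerm (n + 1) i * (Y ^ ((i : ℤ).toNat) * qb Y (2 * n) (i : ℤ)))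
      + (∑ i ∈ range (2 * n + 3),
          gaussTerm (n + 1) i * ((1 + Y ^ (2 * n + 1)) * qb Y (2 * n) ((i : ℤ) - 1)))
      + (∑ i ∈ range (2 * n + 3),
          gaussTerm (n + 1) i * (Y ^ (((2 * n : ℕ) : ℤ) + 2 - (i : ℤ)).toNat * qb Y (2 * n) ((i : ℤ) - 2))) := by
    unfold gaussSum
    rw [show 2 * (n + 1) + 1 = 2 * n + 3 by ring]
    rw [← Finset.sum_add_distrib, ← Finset.sum_add_distrib]
    refine Finset.sum_congr rfl (fun i _ => ?_)
    rw [show 2 * (n + 1) = 2 * n + 2 by ring, qb_two_step]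
    ring
  -- S1
  have hS1 : (∑ i ∈ range (2 * n + 3),
      gaussTerm (n + 1) i * (Y ^ ((i : ℤ).toNat) * qb Y (2 * n) (i : ℤ)))
      = -((X : S) ^ (2 * n + 1) * gaussSum n) := by
    rw [Finset.sum_range_succ, Finset.sum_range_succ]
    rw [qb_gt Y (2 * n) ((2 * n + 2 : ℕ) : ℤ) (by push_cast; omega),
      qb_gt Y (2 * n) ((2 * n + 1 : ℕ) : ℤ) (by push_cast; omega)]
    rw [mul_zero, mul_zero, mul_zero, mul_zero, add_zero, add_zero]
    have hterm : ∀ i ∈ range (2 * n + 1),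
        gaussTerm (n + 1) i * (Y ^ ((i : ℤ).toNat) * qb Y (2 * n) (i : ℤ))
        = -((X : S) ^ (2 * n + 1) * (gaussTerm n i * qb Y (2 * n) (i : ℤ))) := by
      intro i _
      have htn : ((i : ℤ)).toNat = i := Int.toNat_natCast i
      have hYp : Y ^ i = (X : S) ^ (2 * i) := by rw [hY, ← pow_mul]
      have hpows : (X : S) ^ ((Nat.dist i (n + 1)) ^ 2) * (X : S) ^ (2 * i)
          = (X : S) ^ ((Nat.dist i n) ^ 2) * (X : S) ^ (2 * n + 1) := by
        rw [← pow_add, ← pow_add, dist_sq_shift1]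
      have e1 : gaussTerm (n + 1) i * (Y ^ ((i : ℤ).toNat) * qb Y (2 * n) (i : ℤ))
          = -((-1 : S) ^ (i + n) *
              (((X : S) ^ ((Nat.dist i (n + 1)) ^ 2) * (X : S) ^ (2 * i)) * qb Y (2 * n) (i : ℤ))) := by
        unfold gaussTerm
        rw [htn, hYp, show i + (n + 1) = (i + n) + 1 by ring, pow_succ]
        ring
      rw [e1, hpows]
      unfold gaussTerm
      ring
    rw [Finset.sum_congr rfl hterm, Finset.sum_neg_distrib, ← Finset.mul_sum]
    rfl
  -- S2
  have hS2 : (∑ i ∈ range (2 * n + 3),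
      gaussTerm (n + 1) i * ((1 + Y ^ (2 * n + 1)) * qb Y (2 * n) ((i : ℤ) - 1)))
      = gaussSum n + (X : S) ^ (4 * n + 2) * gaussSum n := by
    rw [Finset.sum_range_succ']
    have hz : gaussTerm (n + 1) 0 * ((1 + Y ^ (2 * n + 1)) * qb Y (2 * n) (((0 : ℕ) : ℤ) - 1)) = 0 := by
      rw [qb_neg Y (2 * n) _ (by norm_num)]
      ring
    rw [hz, add_zero]
    rw [Finset.sum_range_succ]
    have hz2 : gaussTerm (n + 1) (2 * n + 1 + 1) *
        ((1 + Y ^ (2 * n + 1)) * qb Y (2 * n) (((2 * n + 1 + 1 : ℕ) : ℤ) - 1)) = 0 := by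
      rw [qb_gt Y (2 * n) _ (by push_cast; omega)]
      ring
    rw [hz2, add_zero]
    have hterm : ∀ i ∈ range (2 * n + 1),
        gaussTerm (n + 1) (i + 1) * ((1 + Y ^ (2 * n + 1)) * qb Y (2 * n) (((i + 1 : ℕ) : ℤ) - 1))
        = gaussTerm n i * qb Y (2 * n) (i : ℤ)
          + (X : S) ^ (4 * n + 2) * (gaussTerm n i * qb Y (2 * n) (i : ℤ)) := by
      intro i _
      have hc : ((i + 1 : ℕ) : ℤ) - 1 = (i : ℤ) := by push_cast; ring
      rw [hc, gaussTerm_succ, hYpow]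
      ring
    rw [Finset.sum_congr rfl hterm, Finset.sum_add_distrib, ← Finset.mul_sum]
    rfl
  -- S3
  have hS3 : (∑ i ∈ range (2 * n + 3),
      gaussTerm (n + 1) i * (Y ^ (((2 * n : ℕ) : ℤ) + 2 - (i : ℤ)).toNat * qb Y (2 * n) ((i : ℤ) - 2)))
      = -((X : S) ^ (2 * n + 1) * gaussSum n) := by
    rw [Finset.sum_range_succ']
    have hz : gaussTerm (n + 1) 0 *
        (Y ^ (((2 * n : ℕ) : ℤ) + 2 - ((0 : ℕ) : ℤ)).toNat * qb Y (2 * n) (((0 : ℕ) : ℤ) - 2)) = 0 := by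
      rw [qb_neg Y (2 * n) _ (by norm_num)]
      ring
    rw [hz, add_zero, Finset.sum_range_succ']
    have hz2 : gaussTerm (n + 1) (0 + 1) *
        (Y ^ (((2 * n : ℕ) : ℤ) + 2 - ((0 + 1 : ℕ) : ℤ)).toNat * qb Y (2 * n) (((0 + 1 : ℕ) : ℤ) - 2)) = 0 := by
      rw [qb_neg Y (2 * n) _ (by norm_num)]
      ring
    rw [hz2, add_zero]
    have hterm : ∀ i ∈ range (2 * n + 1),
        gaussTerm (n + 1) (i + 1 + 1) *
          (Y ^ (((2 * n : ℕ) : ℤ) + 2 - ((i + 1 + 1 : ℕ) : ℤ)).toNat * qb Y (2 * n) (((i + 1 + 1 : ℕ) : ℤ) - 2))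
        = -((X : S) ^ (2 * n + 1) * (gaussTerm n i * qb Y (2 * n) (i : ℤ))) := by
      intro i hi
      rw [Finset.mem_range] at hi
      have hi2 : i ≤ 2 * n := by omega
      have hc1 : (((2 * n : ℕ) : ℤ) + 2 - ((i + 1 + 1 : ℕ) : ℤ)).toNat = 2 * n - i := by
        push_cast; omega
      have hc2 : ((i + 1 + 1 : ℕ) : ℤ) - 2 = (i : ℤ) := by push_cast; ring
      rw [hc1, hc2]
      have hYp : Y ^ (2 * n - i) = (X : S) ^ (2 * (2 * n - i)) := by rw [hY, ← pow_mul]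
      have hpows : (X : S) ^ ((Nat.dist (i + 2) (n + 1)) ^ 2) * (X : S) ^ (2 * (2 * n - i))
          = (X : S) ^ ((Nat.dist i n) ^ 2) * (X : S) ^ (2 * n + 1) := by
        rw [← pow_add, ← pow_add, dist_sq_shift2 i n hi2]
      have e1 : gaussTerm (n + 1) (i + 1 + 1) * (Y ^ (2 * n - i) * qb Y (2 * n) (i : ℤ))
          = -((-1 : S) ^ (i + n) *
              (((X : S) ^ ((Nat.dist (i + 2) (n + 1)) ^ 2) * (X : S) ^ (2 * (2 * n - i))) *
                qb Y (2 * n) (i : ℤ))) := by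
        unfold gaussTerm
        rw [hYp, show (i + 1 + 1) + (n + 1) = ((i + n) + 1) + 2 by ring, pow_add, pow_succ,
          show i + 1 + 1 = i + 2 by ring]
        norm_num
        ring
      rw [e1, hpows]
      unfold gaussTerm
      ring
    rw [Finset.sum_congr rfl hterm, Finset.sum_neg_distrib, ← Finset.mul_sum]
    rfl
  rw [hsum, hS1, hS2, hS3]
  have hx2 : ((X : S) ^ (2 * n + 1)) ^ 2 = (X : S) ^ (4 * n + 2) := by
    rw [← pow_mul]; congr 1; ring
  have hexp : (1 - (X : S) ^ (2 * n + 1)) ^ 2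
      = 1 - 2 * (X : S) ^ (2 * n + 1) + (X : S) ^ (4 * n + 2) := by
    rw [← hx2]; ring
  rw [hexp]
  ring


open PowerSeries Finset


noncomputable def Vser (n : ℕ) : S := ∏ k ∈ Ioc 0 n, (1 - ((X : S) ^ 2) ^ k)

/-- the coefficients of the theta series `∑_{j ∈ ℤ} (-1)^j q^(j^2)` -/
def sqc (m : ℕ) : R3 :=
  if m = 0 then 1 else if (Nat.sqrt m) ^ 2 = m then 2 * (-1 : R3) ^ (Nat.sqrt m) else 0

noncomputable def Phi : S := PowerSeries.mk sqc

lemma one_sub_Ysq_pow (i t : ℕ) (ht : i < t) : OneUpTo (2 * i + 1) (1 - ((X : S) ^ 2) ^ t) := by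
  rw [← pow_mul]
  exact oneUpTo_one_sub_pow (by omega)

/-- key: `qb (X^2) (2n) i * Vser n` has trivial coefficients far out. -/
lemma qbV_oneUpTo (n i : ℕ) (hi : i ≤ 2 * n) :
    OneUpTo (2 * (min i (2 * n - i)) + 1) (qb ((X : S) ^ 2) (2 * n) (i : ℤ) * Vser n) := by
  set Y : S := (X : S) ^ 2 with hY
  rcases le_or_gt i n with h | h
  · have hmin : min i (2 * n - i) = i := by omega
    rw [hmin]
    have hsplit : Vser n = (∏ k ∈ Ioc 0 i, (1 - Y ^ k)) * ∏ k ∈ Ioc i n, (1 - Y ^ k) := by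
      unfold Vser
      rw [Finset.prod_Ioc_consecutive _ (by omega) h]
    rw [hsplit, ← mul_assoc, qb_closed Y (2 * n) i (2 * n - i) (by omega)]
    apply OneUpTo.mul
    · apply OneUpTo.prod
      intro t ht
      rw [Finset.mem_Ioc] at ht
      exact one_sub_Ysq_pow i t (by omega)
    · apply OneUpTo.prod
      intro t ht
      rw [Finset.mem_Ioc] at ht
      exact one_sub_Ysq_pow i t (by omega)
  · -- use symmetry
    have hsym : qb Y (2 * n) (i : ℤ) = qb Y (2 * n) (((2 * n - i : ℕ) : ℤ)) := by
      have hcast : ((2 * n - i : ℕ) : ℤ) = ((2 * n : ℕ) : ℤ) - (i : ℤ) := by omega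
      rw [hcast]
      exact qb_symm Y (2 * n) (i : ℤ)
    have hmin : min i (2 * n - i) = 2 * n - i := by omega
    rw [hmin, hsym]
    set i' := 2 * n - i with hi'
    have hi'n : i' ≤ n := by omega
    have hsplit : Vser n = (∏ k ∈ Ioc 0 i', (1 - Y ^ k)) * ∏ k ∈ Ioc i' n, (1 - Y ^ k) := by
      unfold Vser
      rw [Finset.prod_Ioc_consecutive _ (by omega) hi'n]
    rw [hsplit, ← mul_assoc, qb_closed Y (2 * n) i' (2 * n - i') (by omega)]
    apply OneUpTo.mul
    · apply OneUpTo.prod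
      intro t ht
      rw [Finset.mem_Ioc] at ht
      exact one_sub_Ysq_pow i' t (by omega)
    · apply OneUpTo.prod
      intro t ht
      rw [Finset.mem_Ioc] at ht
      exact one_sub_Ysq_pow i' t (by omega)

lemma nat_dist_def (a b : ℕ) : Nat.dist a b = (a - b) + (b - a) := rfl

lemma min_dist (n i : ℕ) (hi : i ≤ 2 * n) :
    min i (2 * n - i) = n - Nat.dist i n := by
  rw [nat_dist_def]
  omega

lemma dist_le (n i : ℕ) (hi : i ≤ 2 * n) : Nat.dist i n ≤ n := by
  rw [nat_dist_def]
  omega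

lemma arith_bound (m n d : ℕ) (hmn : m ≤ n) (hdn : d ≤ n) :
    m - d ^ 2 ≤ 2 * (n - d) + 1 := by
  rcases le_or_gt (d ^ 2) m with h | h
  · have h1 : d ^ 2 + d ≥ 2 * d := by nlinarith
    omega
  · omega

lemma go_coeff (m n : ℕ) (hmn : m ≤ n) :
    coeff m (gaussSum n * Vser n) = sqc m := by
  unfold gaussSum
  rw [Finset.sum_mul, map_sum]
  have hterm : ∀ i ∈ range (2 * n + 1),
      coeff m (gaussTerm n i * qb ((X : S) ^ 2) (2 * n) (i : ℤ) * Vser n)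
      = if (Nat.dist i n) ^ 2 = m then (-1 : R3) ^ (i + n) else 0 := by
    intro i hi
    rw [Finset.mem_range] at hi
    have hi2 : i ≤ 2 * n := by omega
    have hCneg : ((-1 : S)) ^ (i + n) = C ((-1 : R3) ^ (i + n)) := by
      rw [map_pow, map_neg, map_one]
    have hassoc : gaussTerm n i * qb ((X : S) ^ 2) (2 * n) (i : ℤ) * Vser n
        = C ((-1 : R3) ^ (i + n)) *
          ((X : S) ^ ((Nat.dist i n) ^ 2) *
            (qb ((X : S) ^ 2) (2 * n) (i : ℤ) * Vser n)) := by
      unfold gaussTerm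
      rw [← hCneg]
      ring
    rw [hassoc, PowerSeries.coeff_C_mul, coeff_X_pow_mul']
    set d := Nat.dist i n with hd
    have hdn : d ≤ n := dist_le n i hi2
    by_cases hle : d ^ 2 ≤ m
    · rw [if_pos hle]
      have hbound : m - d ^ 2 ≤ 2 * (min i (2 * n - i)) + 1 := by
        rw [min_dist n i hi2]
        exact arith_bound m n d hmn hdn
      rw [qbV_oneUpTo n i hi2 (m - d ^ 2) hbound]
      by_cases heq : d ^ 2 = m
      · rw [if_pos (by omega), if_pos heq]
        simp
      · rw [if_neg (by omega), if_neg heq]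
        ring
    · rw [if_neg hle, if_neg (by omega)]
      ring
  rw [Finset.sum_congr rfl hterm, ← Finset.sum_filter]
  by_cases hm0 : m = 0
  · subst hm0
    have hfilter : (range (2 * n + 1)).filter (fun i => (Nat.dist i n) ^ 2 = 0) = {n} := by
      ext i
      simp only [Finset.mem_filter, Finset.mem_range, Finset.mem_singleton]
      constructor
      · rintro ⟨h1, h2⟩
        have h3 : Nat.dist i n = 0 := (Nat.pow_eq_zero.mp h2).1
        rw [nat_dist_def] at h3
        omega
      · rintro rfl
        refine ⟨by omega, ?_⟩
        simp [Nat.dist_self]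
    rw [hfilter, Finset.sum_singleton]
    have : Even (n + n) := ⟨n, rfl⟩
    rw [this.neg_one_pow]
    simp [sqc]
  · by_cases hsq : (Nat.sqrt m) ^ 2 = m
    · set r := Nat.sqrt m with hr
      have hr1 : 1 ≤ r := by
        rcases Nat.eq_zero_or_pos r with h | h
        · exfalso; rw [h] at hsq; simp at hsq; omega
        · omega
      have hrm : r ≤ m := by nlinarith
      have hrn : r ≤ n := le_trans hrm hmn
      have hfilter : (range (2 * n + 1)).filter (fun i => (Nat.dist i n) ^ 2 = m)
          = {n - r, n + r} := by
        ext i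
        simp only [Finset.mem_filter, Finset.mem_range, Finset.mem_insert, Finset.mem_singleton]
        constructor
        · rintro ⟨h1, h2⟩
          have hdr : Nat.dist i n = r := by
            have := congrArg Nat.sqrt h2
            rwa [Nat.sqrt_eq', ← hr] at this
          rw [nat_dist_def] at hdr
          omega
        · rintro (rfl | rfl)
          · constructor
            · omega
            · have : Nat.dist (n - r) n = r := by rw [nat_dist_def]; omega
              rw [this, hsq]
          · constructor
            · omega
            · have : Nat.dist (n + r) n = r := by rw [nat_dist_def]; omega
              rw [this, hsq]
      rw [hfilter, Finset.sum_pair (by omega)]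
      have hval : ((-1 : R3)) ^ ((n - r) + n) + ((-1 : R3)) ^ ((n + r) + n)
          = 2 * (-1 : R3) ^ r := by
        rcases Nat.even_or_odd r with hpar | hpar
        · have e1 : Even ((n - r) + n) := by
            rw [Nat.even_iff] at hpar ⊢; omega
          have e2 : Even ((n + r) + n) := by
            rw [Nat.even_iff] at hpar ⊢; omega
          rw [e1.neg_one_pow, e2.neg_one_pow, hpar.neg_one_pow]
          ring
        · have e1 : Odd ((n - r) + n) := by
            rw [Nat.odd_iff] at hpar ⊢; omega
          have e2 : Odd ((n + r) + n) := by
            rw [Nat.odd_iff] at hpar ⊢; omega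
          rw [e1.neg_one_pow, e2.neg_one_pow, hpar.neg_one_pow]
          ring
      rw [hval]
      unfold sqc
      rw [if_neg hm0, if_pos hsq]
    · have hfilter : (range (2 * n + 1)).filter (fun i => (Nat.dist i n) ^ 2 = m) = ∅ := by
        ext i
        simp only [Finset.mem_filter, Finset.mem_range, Finset.notMem_empty, iff_false,
          not_and]
        intro h1 h2
        apply hsq
        have := congrArg Nat.sqrt h2
        rw [Nat.sqrt_eq'] at this
        rw [← this, h2]
      rw [hfilter, Finset.sum_empty]
      unfold sqc
      rw [if_neg hm0, if_neg hsq]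


lemma gaussSum_zero : gaussSum 0 = 1 := by
  unfold gaussSum
  rw [show 2 * 0 + 1 = 1 by ring, Finset.sum_range_one]
  unfold gaussTerm
  rw [Nat.cast_zero, qb_zero]
  simp [Nat.dist_self]

open PowerSeries Finset


/-! ### the finite products -/

noncomputable def Useq (n : ℕ) : S := ∏ k ∈ Ioc 0 n, (1 - (X : S) ^ k)
noncomputable def Dseq (n : ℕ) : S := ∏ k ∈ Ioc 0 n, (1 + (X : S) ^ k)
noncomputable def OddSeq (n : ℕ) : S := ∏ k ∈ Ioc 0 n, (1 - (X : S) ^ (2 * k - 1))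
noncomputable def geom (k : ℕ) : S := PowerSeries.mk (fun t => if k ∣ t then 1 else 0)
noncomputable def Pseq (n : ℕ) : S := ∏ k ∈ Ioc 0 n, geom k
noncomputable def Wseq (n : ℕ) : S := ∏ k ∈ Ioc n (2 * n), (1 - (X : S) ^ k)

lemma gauss_prod (n : ℕ) : gaussSum n = OddSeq n * OddSeq n := by
  induction n with
  | zero => rw [gaussSum_zero]; unfold OddSeq; simp
  | succ n ih =>
    rw [gauss_rec, ih]
    unfold OddSeq
    rw [Finset.prod_Ioc_succ_top (by omega), show 2 * (n + 1) - 1 = 2 * n + 1 by omega]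
    ring

lemma geom_mul (k : ℕ) (hk : 0 < k) : (1 - (X : S) ^ k) * geom k = 1 := by
  ext m
  rw [sub_mul, one_mul, map_sub, PowerSeries.coeff_one]
  unfold geom
  rw [PowerSeries.coeff_mk, coeff_X_pow_mul']
  by_cases hkm : k ≤ m
  · rw [if_pos hkm, PowerSeries.coeff_mk]
    have hdvd : (k ∣ m) ↔ (k ∣ m - k) := by
      constructor
      · intro h; exact (Nat.dvd_sub h dvd_rfl)
      · intro h
        have hmk : m = (m - k) + k := by omega
        rw [hmk]
        exact Nat.dvd_add h dvd_rfl
    have hm0 : ¬ (m = 0) := by omega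
    rw [if_neg hm0]
    by_cases h : k ∣ m
    · rw [if_pos h, if_pos (hdvd.mp h)]; ring
    · rw [if_neg h, if_neg (fun hc => h (hdvd.mpr hc))]; ring
  · rw [if_neg hkm]
    rcases Nat.eq_zero_or_pos m with rfl | hm
    · rw [if_pos (dvd_zero k), if_pos rfl]; ring
    · have hm0 : ¬ (m = 0) := by omega
      have hnd : ¬ (k ∣ m) := by
        intro h
        rcases h with ⟨c, rfl⟩
        rcases Nat.eq_zero_or_pos c with rfl | hc
        · omega
        · nlinarith
      rw [if_neg hm0, if_neg hnd]
      ring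

lemma U_mul_P (n : ℕ) : Useq n * Pseq n = 1 := by
  unfold Useq Pseq
  rw [← Finset.prod_mul_distrib]
  apply Finset.prod_eq_one
  intro k hk
  rw [Finset.mem_Ioc] at hk
  exact geom_mul k hk.1

lemma D_mul_U (n : ℕ) : Dseq n * Useq n = Vser n := by
  unfold Dseq Useq Vser
  rw [← Finset.prod_mul_distrib]
  apply Finset.prod_congr rfl
  intro k hk
  have h2 : ((X : S) ^ 2) ^ k = (X : S) ^ k * (X : S) ^ k := by
    rw [← pow_mul, two_mul, pow_add]
  rw [h2]
  ring

lemma Odd_mul_V (n : ℕ) : OddSeq n * Vser n = Useq (2 * n) := by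
  induction n with
  | zero => unfold OddSeq Vser Useq; simp
  | succ n ih =>
    unfold OddSeq Vser Useq
    rw [Finset.prod_Ioc_succ_top (show 0 ≤ n by omega),
        Finset.prod_Ioc_succ_top (show 0 ≤ n by omega)]
    rw [show 2 * (n + 1) - 1 = 2 * n + 1 by omega]
    have h2 : 2 * (n + 1) = (2 * n + 1) + 1 := by ring
    rw [h2, Finset.prod_Ioc_succ_top (by omega), Finset.prod_Ioc_succ_top (by omega)]
    unfold OddSeq Vser Useq at ih
    rw [show ((X : S) ^ 2) ^ (n + 1) = (X : S) ^ (2 * n + 1 + 1) by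
          rw [← pow_mul, show 2 * (n + 1) = 2 * n + 1 + 1 by ring]]
    calc (∏ k ∈ Ioc 0 n, (1 - (X:S) ^ (2 * k - 1))) * (1 - (X:S) ^ (2 * n + 1)) *
          ((∏ k ∈ Ioc 0 n, (1 - ((X:S) ^ 2) ^ k)) * (1 - (X:S) ^ (2 * n + 1 + 1)))
        = ((∏ k ∈ Ioc 0 n, (1 - (X:S) ^ (2 * k - 1))) * ∏ k ∈ Ioc 0 n, (1 - ((X:S) ^ 2) ^ k)) *
          (1 - (X:S) ^ (2 * n + 1)) * (1 - (X:S) ^ (2 * n + 1 + 1)) := by ring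
      _ = _ := by rw [ih]

lemma U_two (n : ℕ) : Useq (2 * n) = Useq n * Wseq n := by
  unfold Useq Wseq
  rw [Finset.prod_Ioc_consecutive _ (by omega) (by omega)]

lemma W_one (n : ℕ) : OneUpTo n (Wseq n) := by
  apply OneUpTo.prod
  intro k hk
  rw [Finset.mem_Ioc] at hk
  exact oneUpTo_one_sub_pow (by omega)

lemma OddD_eq_W (n : ℕ) : OddSeq n * Dseq n = Wseq n := by
  calc OddSeq n * Dseq n = OddSeq n * Dseq n * (Useq n * Pseq n) := by rw [U_mul_P]; ring
    _ = OddSeq n * (Dseq n * Useq n) * Pseq n := by ring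
    _ = OddSeq n * Vser n * Pseq n := by rw [D_mul_U]
    _ = Useq (2 * n) * Pseq n := by rw [Odd_mul_V]
    _ = Useq n * Wseq n * Pseq n := by rw [U_two]
    _ = Wseq n * (Useq n * Pseq n) := by ring
    _ = Wseq n := by rw [U_mul_P]; ring

lemma go_prod_eq (n : ℕ) :
    (gaussSum n * Vser n) * (Dseq n * Pseq n) = Wseq n * Wseq n := by
  rw [gauss_prod]
  calc OddSeq n * OddSeq n * Vser n * (Dseq n * Pseq n)
      = (OddSeq n * Dseq n) * ((OddSeq n * Vser n) * Pseq n) := by ring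
    _ = Wseq n * (Useq (2 * n) * Pseq n) := by rw [OddD_eq_W, Odd_mul_V]
    _ = Wseq n * (Useq n * Wseq n * Pseq n) := by rw [U_two]
    _ = Wseq n * Wseq n * (Useq n * Pseq n) := by ring
    _ = Wseq n * Wseq n := by rw [U_mul_P]; ring

lemma tends_goDP : TendsTo (fun n => (gaussSum n * Vser n) * (Dseq n * Pseq n)) 1 := by
  intro m n hn
  dsimp only
  rw [go_prod_eq, PowerSeries.coeff_one]
  exact ((W_one n).mul (W_one n)) m hn

lemma tends_go : TendsTo (fun n => gaussSum n * Vser n) Phi := by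
  intro m n hn
  rw [go_coeff m n hn]
  unfold Phi
  rw [PowerSeries.coeff_mk]


open PowerSeries Finset


/-! ### counting sets -/

def PSet (n m : ℕ) : Type := {μ : Multiset ℕ // (∀ i ∈ μ, 0 < i ∧ i ≤ n) ∧ μ.sum = m}
def DSet (m : ℕ) : Type := {t : Finset ℕ // 0 ∉ t ∧ t.val.sum = m}
def OSet (m : ℕ) : Type := {x : Multiset ℕ × Finset ℕ // IsOverpartition x ∧ x.1.sum = m}

lemma fsum_eq (t : Finset ℕ) : ∑ i ∈ t, i = t.val.sum := by
  rw [Finset.sum]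
  simp

instance PSet.finite (n m : ℕ) : Finite (PSet n m) := by
  apply Finite.of_injective
    (fun x : PSet n m => (⟨x.val, fun {i} hi => (x.2.1 i hi).1, x.2.2⟩ : Nat.Partition m))
  intro a b hab
  exact Subtype.ext (congrArg Nat.Partition.parts hab)

lemma DSet.le_sum {m : ℕ} (t : DSet m) : ∀ i ∈ t.val, i ≤ m := by
  intro i hi
  have := Finset.single_le_sum (f := fun i => i) (fun j _ => Nat.zero_le j) hi
  rwa [fsum_eq, t.2.2] at this

instance DSet.finite (m : ℕ) : Finite (DSet m) := by
  apply Finite.of_injective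
    (fun t : DSet m => (⟨t.val, by
      rw [Finset.mem_powerset]
      intro i hi
      rw [Finset.mem_range]
      exact Nat.lt_succ_of_le (DSet.le_sum t i hi)⟩ :
        {s : Finset ℕ // s ∈ (Finset.range (m + 1)).powerset}))
  intro a b hab
  apply Subtype.ext
  exact congrArg (fun z : {s : Finset ℕ // s ∈ (Finset.range (m + 1)).powerset} => z.val) hab

instance OSet.finite (m : ℕ) : Finite (OSet m) := by
  apply Finite.of_injective (fun x : OSet m =>
    ((⟨x.val.1, fun {i} hi => x.2.1.1 i hi, x.2.2⟩ : Nat.Partition m),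
     (⟨x.val.2, by
        rw [Finset.mem_powerset]
        intro s hs
        rw [Finset.mem_range]
        have hmem := x.2.1.2 s hs
        have hpos : ∀ i ∈ x.val.1, (0:ℕ) ≤ i := fun i _ => Nat.zero_le i
        have := Multiset.single_le_sum hpos s hmem
        rw [x.2.2] at this
        omega⟩ : {s : Finset ℕ // s ∈ (Finset.range (m + 1)).powerset})))
  intro a b hab
  have h1 := congrArg (fun z => z.1.parts) hab
  have h2 := congrArg (fun z => z.2.val) hab
  simp only at h1 h2
  apply Subtype.ext
  exact Prod.ext h1 h2

noncomputable def pc (n m : ℕ) : ℕ := Nat.card (PSet n m)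
noncomputable def pcard (m : ℕ) : ℕ := Nat.card (PSet m m)
noncomputable def dcard (m : ℕ) : ℕ := Nat.card (DSet m)
noncomputable def obar (m : ℕ) : ℕ := Nat.card (OSet m)

/-- bound relaxation -/
def PSet.relax (n m : ℕ) (h : m ≤ n) : PSet n m ≃ PSet m m :=
  Equiv.subtypeEquivRight (by
    intro μ
    constructor
    · rintro ⟨h1, h2⟩
      refine ⟨fun i hi => ⟨(h1 i hi).1, ?_⟩, h2⟩
      have := Multiset.single_le_sum (fun x _ => Nat.zero_le x) i hi
      omega
    · rintro ⟨h1, h2⟩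
      refine ⟨fun i hi => ⟨(h1 i hi).1, ?_⟩, h2⟩
      have := (h1 i hi).2
      omega)

lemma pc_relax {n m : ℕ} (h : m ≤ n) : pc n m = pcard m :=
  Nat.card_congr (PSet.relax n m h)

/-- fiberwise counting -/
lemma card_fiber_sum {α : Type} [Finite α] {N : ℕ} (f : α → ℕ) (hf : ∀ a, f a < N)
    (G : ℕ → Type) [∀ j, Finite (G j)]
    (e : ∀ j, j < N → ({a : α // f a = j} ≃ G j)) :
    Nat.card α = ∑ j ∈ range N, Nat.card (G j) := by
  classical
  letI := Fintype.ofFinite α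
  rw [Nat.card_eq_fintype_card, ← Finset.card_univ,
    Finset.card_eq_sum_card_fiberwise (t := range N) (f := f)
      (fun a _ => Finset.mem_range.mpr (hf a))]
  apply Finset.sum_congr rfl
  intro j hj
  rw [Finset.mem_range] at hj
  calc (univ.filter (fun a => f a = j)).card
      = Fintype.card {a // f a = j} := (Fintype.card_subtype _).symm
    _ = Nat.card {a // f a = j} := (Nat.card_eq_fintype_card).symm
    _ = Nat.card (G j) := Nat.card_congr (e j hj)

/-! ### recursion for partitions with bounded parts -/

lemma count_decomp (μ : Multiset ℕ) (n : ℕ) :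
    (Multiset.count (n + 1) μ) * (n + 1) + (μ.filter (fun i => ¬ i = n + 1)).sum = μ.sum := by
  have hdec := Multiset.filter_add_not (fun i => i = n + 1) μ
  have hrep := Multiset.filter_eq' μ (n + 1)
  have := congrArg Multiset.sum hdec
  rw [Multiset.sum_add, hrep, Multiset.sum_replicate, smul_eq_mul] at this
  exact this

lemma count_le (n m : ℕ) (x : PSet (n + 1) m) :
    Multiset.count (n + 1) x.val < m / (n + 1) + 1 := by
  have hd := count_decomp x.val n
  rw [x.2.2] at hd
  have hle : (Multiset.count (n + 1) x.val) * (n + 1) ≤ m := by omega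
  have h01 : 0 < n + 1 := by omega
  have := (Nat.le_div_iff_mul_le h01).mpr hle
  omega

def pFiber (n m j : ℕ) (hj : j < m / (n + 1) + 1) :
    {a : PSet (n + 1) m // Multiset.count (n + 1) a.val = j} ≃ PSet n (m - j * (n + 1)) where
  toFun := fun a => ⟨a.val.val.filter (fun i => ¬ i = n + 1), by
    constructor
    · intro i hi
      rw [Multiset.mem_filter] at hi
      have := a.val.2.1 i hi.1
      have h2 := hi.2
      omega
    · have hd := count_decomp a.val.val n
      rw [a.val.2.2, a.2] at hd
      omega⟩
  invFun := fun ν => by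
    have hjm : j * (n + 1) ≤ m := by
      have h1 : j ≤ m / (n + 1) := by omega
      calc j * (n + 1) ≤ (m / (n + 1)) * (n + 1) := Nat.mul_le_mul_right _ h1
        _ ≤ m := Nat.div_mul_le_self m (n + 1)
    have hnotin : (n + 1) ∉ ν.val := by
      intro h
      have := (ν.2.1 (n + 1) h).2
      omega
    refine ⟨⟨ν.val + Multiset.replicate j (n + 1), ⟨?_, ?_⟩⟩, ?_⟩
    · intro i hi
      rw [Multiset.mem_add] at hi
      rcases hi with hi | hi
      · have := ν.2.1 i hi
        omega
      · rw [Multiset.eq_of_mem_replicate hi]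
        omega
    · rw [Multiset.sum_add, Multiset.sum_replicate, smul_eq_mul, ν.2.2]
      omega
    · rw [Multiset.count_add, Multiset.count_replicate_self,
        Multiset.count_eq_zero_of_notMem hnotin]
      omega
  left_inv := by
    rintro ⟨⟨μ, hμ⟩, ha⟩
    apply Subtype.ext
    apply Subtype.ext
    simp only
    have hrep := Multiset.filter_eq' μ (n + 1)
    have hdec := Multiset.filter_add_not (fun i => i = n + 1) μ
    simp only at ha
    calc Multiset.filter (fun i => ¬ i = n + 1) μ + Multiset.replicate j (n + 1)
        = Multiset.filter (fun i => ¬ i = n + 1) μ + Multiset.filter (fun i => i = n + 1) μ := by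
          rw [hrep, ha]
      _ = μ := by rw [add_comm, hdec]
  right_inv := by
    rintro ⟨ν, hν⟩
    apply Subtype.ext
    simp only
    have hnotin : (n + 1) ∉ ν := by
      intro h
      have := (hν.1 (n + 1) h).2
      omega
    rw [Multiset.filter_add]
    have h1 : ν.filter (fun i => ¬ i = n + 1) = ν := by
      apply Multiset.filter_eq_self.mpr
      intro i hi hc
      exact hnotin (hc ▸ hi)
    have h2 : (Multiset.replicate j (n + 1)).filter (fun i => ¬ i = n + 1) = 0 := by
      apply Multiset.filter_eq_nil.mpr
      intro i hi
      rw [Multiset.eq_of_mem_replicate hi]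
      simp
    rw [h1, h2, add_zero]

lemma pc_rec (n m : ℕ) :
    pc (n + 1) m = ∑ j ∈ range (m / (n + 1) + 1), pc n (m - j * (n + 1)) := by
  exact card_fiber_sum (fun a => Multiset.count (n + 1) a.val) (count_le n m)
    (fun j => PSet n (m - j * (n + 1))) (pFiber n m)


open PowerSeries Finset


def TSet (N : ℕ) : Type :=
  {x : (Multiset ℕ × Finset ℕ) × (Multiset ℕ × Finset ℕ) //
    IsOverpartition x.1 ∧ IsOverpartition x.2 ∧ x.1.1.sum + x.2.1.sum = N}


/-! ### overline multiset facts -/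

lemma overline_le {m : ℕ} (x : OSet m) : x.val.2.val ≤ x.val.1 := by
  rw [Multiset.le_iff_count]
  intro a
  have hnd : x.val.2.val.Nodup := x.val.2.nodup
  have h1 : Multiset.count a x.val.2.val ≤ 1 := Multiset.nodup_iff_count_le_one.mp hnd a
  by_cases ha : a ∈ x.val.2
  · have : a ∈ x.val.1 := x.2.1.2 a ha
    have h2 : 1 ≤ Multiset.count a x.val.1 := Multiset.one_le_count_iff_mem.mpr this
    omega
  · have : Multiset.count a x.val.2.val = 0 := by
      rw [Multiset.count_eq_zero]
      intro hc
      exact ha (Finset.mem_def.mpr hc)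
    omega

lemma overline_sum_le {m : ℕ} (x : OSet m) : x.val.2.val.sum ≤ m := by
  have hle := overline_le x
  have hdec := congrArg Multiset.sum (add_tsub_cancel_of_le hle)
  rw [Multiset.sum_add, x.2.2] at hdec
  omega

def oFiber (m j : ℕ) (hj : j < m + 1) :
    {a : OSet m // a.val.2.val.sum = j} ≃ DSet j × PSet m (m - j) where
  toFun := fun a =>
    (⟨a.val.val.2, by
      constructor
      · intro h0
        have := a.val.2.1.1 0 (a.val.2.1.2 0 h0)
        omega
      · exact a.2⟩,
     ⟨a.val.val.1 - a.val.val.2.val, by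
      constructor
      · intro i hi
        have hile : i ∈ a.val.val.1 := Multiset.mem_of_le (Multiset.sub_le_self _ _) hi
        refine ⟨a.val.2.1.1 i hile, ?_⟩
        have := Multiset.single_le_sum (fun x _ => Nat.zero_le x) i hile
        rw [a.val.2.2] at this
        omega
      · have hle := overline_le a.val
        have hdec := congrArg Multiset.sum (add_tsub_cancel_of_le hle)
        rw [Multiset.sum_add] at hdec
        rw [a.val.2.2, a.2] at hdec
        omega⟩)
  invFun := fun y =>
    ⟨⟨(y.1.val.val + y.2.val, y.1.val), by
      refine ⟨⟨?_, ?_⟩, ?_⟩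
      · intro i hi
        rw [Multiset.mem_add] at hi
        rcases hi with hi | hi
        · rcases Nat.eq_zero_or_pos i with rfl | h
          · exact absurd (Finset.mem_def.mpr hi) y.1.2.1
          · exact h
        · exact (y.2.2.1 i hi).1
      · intro s hs
        rw [Multiset.mem_add]
        exact Or.inl (Finset.mem_def.mp hs)
      · rw [Multiset.sum_add, y.1.2.2, y.2.2.2]
        omega⟩,
     y.1.2.2⟩
  left_inv := by
    rintro ⟨⟨⟨μ, F⟩, hx⟩, ha⟩
    apply Subtype.ext
    apply Subtype.ext
    simp only
    have hle : F.val ≤ μ := overline_le ⟨⟨μ, F⟩, hx⟩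
    exact Prod.ext (add_tsub_cancel_of_le hle) rfl
  right_inv := by
    rintro ⟨t, ν⟩
    refine Prod.ext (Subtype.ext rfl) (Subtype.ext ?_)
    simp only
    exact add_tsub_cancel_left _ _

lemma obar_eq (m : ℕ) : obar m = ∑ j ∈ range (m + 1), dcard j * pcard (m - j) := by
  have h1 : obar m = ∑ j ∈ range (m + 1), Nat.card (DSet j × PSet m (m - j)) :=
    card_fiber_sum (fun a => a.val.2.val.sum) (fun a => by
        show a.val.2.val.sum < m + 1
        have := overline_sum_le a; omega)
      (fun j => DSet j × PSet m (m - j)) (oFiber m)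
  rw [h1]
  apply Finset.sum_congr rfl
  intro j hj
  rw [Finset.mem_range] at hj
  rw [Nat.card_prod]
  unfold dcard
  congr 1
  have : Nat.card (PSet m (m - j)) = pc m (m - j) := rfl
  rw [this, pc_relax (by omega)]

/-! ### pairs -/

instance TSet.finite (N : ℕ) : Finite (TSet N) := by
  apply Finite.of_injective (fun x : TSet N =>
    (((⟨⟨x.val.1.1.sum, by have := x.2.2.2; omega⟩,
        ⟨x.val.1.1, fun {i} hi => x.2.1.1 i hi, rfl⟩⟩ : Σ k : Fin (N + 1), Nat.Partition k.val),
      (⟨x.val.1.2, by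
        rw [Finset.mem_powerset]
        intro s hs
        rw [Finset.mem_range]
        have hmem := x.2.1.2 s hs
        have := Multiset.single_le_sum (fun i _ => Nat.zero_le i) s hmem
        have h2 := x.2.2.2
        omega⟩ : {s : Finset ℕ // s ∈ (Finset.range (N + 1)).powerset})),
     ((⟨⟨x.val.2.1.sum, by have := x.2.2.2; omega⟩,
        ⟨x.val.2.1, fun {i} hi => x.2.2.1.1 i hi, rfl⟩⟩ : Σ k : Fin (N + 1), Nat.Partition k.val),
      (⟨x.val.2.2, by
        rw [Finset.mem_powerset]
        intro s hs
        rw [Finset.mem_range]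
        have hmem := x.2.2.1.2 s hs
        have := Multiset.single_le_sum (fun i _ => Nat.zero_le i) s hmem
        have h2 := x.2.2.2
        omega⟩ : {s : Finset ℕ // s ∈ (Finset.range (N + 1)).powerset}))))
  intro a b hab
  have h11 := congrArg (fun z => z.1.1.snd.parts) hab
  have h12 := congrArg (fun z => z.1.2.val) hab
  have h21 := congrArg (fun z => z.2.1.snd.parts) hab
  have h22 := congrArg (fun z => z.2.2.val) hab
  simp only at h11 h12 h21 h22
  apply Subtype.ext
  exact Prod.ext (Prod.ext h11 h12) (Prod.ext h21 h22)

def tFiber (N j : ℕ) (hj : j < N + 1) :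
    {a : TSet N // a.val.1.1.sum = j} ≃ OSet j × OSet (N - j) where
  toFun := fun a =>
    (⟨a.val.val.1, ⟨a.val.2.1, a.2⟩⟩,
     ⟨a.val.val.2, ⟨a.val.2.2.1, by
        have := a.val.2.2.2
        have h2 := a.2
        omega⟩⟩)
  invFun := fun y =>
    ⟨⟨(y.1.val, y.2.val), ⟨y.1.2.1, y.2.2.1, by
        rw [y.1.2.2, y.2.2.2]
        omega⟩⟩,
     y.1.2.2⟩
  left_inv := by
    rintro ⟨⟨⟨u, v⟩, hx⟩, ha⟩
    apply Subtype.ext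
    apply Subtype.ext
    rfl
  right_inv := by
    rintro ⟨u, v⟩
    exact Prod.ext (Subtype.ext rfl) (Subtype.ext rfl)

lemma tcard_eq (N : ℕ) : Nat.card (TSet N) = ∑ j ∈ range (N + 1), obar j * obar (N - j) := by
  have h1 : Nat.card (TSet N) = ∑ j ∈ range (N + 1), Nat.card (OSet j × OSet (N - j)) :=
    card_fiber_sum (fun a => a.val.1.1.sum) (fun a => by
        show a.val.1.1.sum < N + 1
        have := a.2.2.2; omega)
      (fun j => OSet j × OSet (N - j)) (tFiber N)
  rw [h1]
  apply Finset.sum_congr rfl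
  intro j _
  rw [Nat.card_prod]
  rfl


open PowerSeries Finset


/-! ### bridge for Pseq -/

instance : Unique (PSet 0 0) where
  default := ⟨0, by simp⟩
  uniq := by
    rintro ⟨μ, hμ⟩
    apply Subtype.ext
    simp only
    by_contra hne
    obtain ⟨i, hi⟩ := Multiset.exists_mem_of_ne_zero hne
    have := hμ.1 i hi
    omega

lemma PSet_zero_empty (m : ℕ) (hm : m ≠ 0) : IsEmpty (PSet 0 m) := by
  constructor
  rintro ⟨μ, hμ⟩
  have hz : μ = 0 := by
    by_contra hne
    obtain ⟨i, hi⟩ := Multiset.exists_mem_of_ne_zero hne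
    have := hμ.1 i hi
    omega
  rw [hz] at hμ
  simp at hμ
  omega

lemma pc_zero (m : ℕ) : pc 0 m = if m = 0 then 1 else 0 := by
  by_cases hm : m = 0
  · subst hm
    rw [if_pos rfl]
    exact Nat.card_unique
  · rw [if_neg hm]
    have := PSet_zero_empty m hm
    exact Nat.card_of_isEmpty

lemma geom_coeff (k b : ℕ) : coeff b (geom k) = if k ∣ b then 1 else 0 := by
  unfold geom
  rw [PowerSeries.coeff_mk]

lemma div_reindex (n m : ℕ) (g : ℕ → R3) :
    ∑ k ∈ range (m + 1), (if (n + 1) ∣ (m - k) then g k else 0)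
    = ∑ j ∈ range (m / (n + 1) + 1), g (m - j * (n + 1)) := by
  rw [← Finset.sum_filter]
  apply Finset.sum_nbij' (i := fun k => (m - k) / (n + 1)) (j := fun j => m - j * (n + 1))
  · intro k hk
    rw [Finset.mem_filter, Finset.mem_range] at hk
    rw [Finset.mem_range]
    have := Nat.div_le_div_right (c := n + 1) (show m - k ≤ m by omega)
    omega
  · intro j hj
    rw [Finset.mem_range] at hj
    rw [Finset.mem_filter, Finset.mem_range]
    have hjm : j * (n + 1) ≤ m := by
      calc j * (n + 1) ≤ (m / (n + 1)) * (n + 1) := Nat.mul_le_mul_right _ (by omega)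
        _ ≤ m := Nat.div_mul_le_self m (n + 1)
    constructor
    · omega
    · have h1 : m - (m - j * (n + 1)) = j * (n + 1) := by omega
      rw [h1]
      exact dvd_mul_left (n + 1) j
  · intro k hk
    rw [Finset.mem_filter, Finset.mem_range] at hk
    have h1 : ((m - k) / (n + 1)) * (n + 1) = m - k := Nat.div_mul_cancel hk.2
    omega
  · intro j hj
    rw [Finset.mem_range] at hj
    have hjm : j * (n + 1) ≤ m := by
      calc j * (n + 1) ≤ (m / (n + 1)) * (n + 1) := Nat.mul_le_mul_right _ (by omega)
        _ ≤ m := Nat.div_mul_le_self m (n + 1)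
    have h1 : m - (m - j * (n + 1)) = j * (n + 1) := by omega
    rw [h1]
    exact Nat.mul_div_cancel j (show 0 < n + 1 by omega)
  · intro k hk
    rw [Finset.mem_filter, Finset.mem_range] at hk
    have h1 : ((m - k) / (n + 1)) * (n + 1) = m - k := Nat.div_mul_cancel hk.2
    have h2 : m - ((m - k) / (n + 1)) * (n + 1) = k := by omega
    rw [h2]

lemma Pseq_coeff (n : ℕ) : ∀ m, coeff m (Pseq n) = (pc n m : R3) := by
  induction n with
  | zero =>
    intro m
    unfold Pseq
    rw [show Ioc 0 0 = (∅ : Finset ℕ) by rfl, Finset.prod_empty, PowerSeries.coeff_one,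
      pc_zero]
    by_cases hm : m = 0
    · rw [if_pos hm, if_pos hm]; norm_num
    · rw [if_neg hm, if_neg hm]; norm_num
  | succ n ih =>
    intro m
    unfold Pseq
    rw [Finset.prod_Ioc_succ_top (by omega)]
    have hP : (∏ k ∈ Ioc 0 n, geom k) = Pseq n := rfl
    rw [hP, PowerSeries.coeff_mul, Nat.sum_antidiagonal_eq_sum_range_succ_mk]
    have hterm : ∀ k ∈ range (m + 1),
        coeff k (Pseq n) * coeff (m - k) (geom (n + 1))
        = if (n + 1) ∣ (m - k) then ((pc n k : R3)) else 0 := by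
      intro k _
      rw [ih k, geom_coeff]
      by_cases h : (n + 1) ∣ (m - k)
      · rw [if_pos h, if_pos h, mul_one]
      · rw [if_neg h, if_neg h, mul_zero]
    rw [Finset.sum_congr rfl hterm, div_reindex n m (fun k => (pc n k : R3)), pc_rec]
    push_cast
    rfl

/-! ### bridge for Dseq -/

lemma Dseq_coeff (m n : ℕ) (h : m ≤ n) : coeff m (Dseq n) = (dcard m : R3) := by
  unfold Dseq
  have hcomm : ∀ k ∈ Ioc 0 n, (1 : S) + X ^ k = X ^ k + 1 := fun k _ => add_comm _ _
  rw [Finset.prod_congr rfl hcomm, Finset.prod_add]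
  simp only [Finset.prod_const_one, mul_one]
  rw [map_sum]
  have hterm : ∀ t ∈ (Ioc 0 n).powerset,
      coeff m (∏ i ∈ t, (X : S) ^ i) = if (∑ i ∈ t, i) = m then 1 else 0 := by
    intro t _
    rw [Finset.prod_pow_eq_pow_sum t (fun i => i) (X : S), PowerSeries.coeff_X_pow]
    by_cases h : (∑ i ∈ t, i) = m
    · rw [if_pos h, if_pos h.symm]
    · rw [if_neg h, if_neg (fun hc => h hc.symm)]
  rw [Finset.sum_congr rfl hterm, Finset.sum_boole]
  congr 1
  have hequiv : {t : Finset ℕ // t ∈ (Ioc 0 n).powerset.filter (fun t => (∑ i ∈ t, i) = m)}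
      ≃ DSet m := by
    apply Equiv.subtypeEquiv (Equiv.refl (Finset ℕ))
    intro t
    simp only [Equiv.refl_apply, Finset.mem_filter, Finset.mem_powerset]
    constructor
    · rintro ⟨h1, h2⟩
      constructor
      · intro h0
        have := h1 h0
        rw [Finset.mem_Ioc] at this
        omega
      · rw [← fsum_eq, h2]
    · rintro ⟨h1, h2⟩
      have hsum : (∑ i ∈ t, i) = m := by rw [fsum_eq]; exact h2
      refine ⟨?_, hsum⟩
      intro i hi
      rw [Finset.mem_Ioc]
      have hle := DSet.le_sum ⟨t, ⟨h1, h2⟩⟩ i hi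
      constructor
      · rcases Nat.eq_zero_or_pos i with rfl | hp
        · exact absurd hi h1
        · exact hp
      · omega
  calc ((Ioc 0 n).powerset.filter (fun t => (∑ i ∈ t, i) = m)).card
      = Nat.card {t : Finset ℕ // t ∈ (Ioc 0 n).powerset.filter (fun t => (∑ i ∈ t, i) = m)} :=
        (Nat.card_eq_finsetCard _).symm
    _ = Nat.card (DSet m) := Nat.card_congr hequiv
    _ = dcard m := rfl

/-! ### series and final assembly -/

noncomputable def Dser : S := PowerSeries.mk fun k => (dcard k : R3)
noncomputable def Pser : S := PowerSeries.mk fun k => (pcard k : R3)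

lemma tends_D : TendsTo Dseq Dser := by
  intro m n h
  rw [Dseq_coeff m n h]
  unfold Dser
  rw [PowerSeries.coeff_mk]

lemma tends_P : TendsTo Pseq Pser := by
  intro m n h
  rw [Pseq_coeff n m, pc_relax h]
  unfold Pser
  rw [PowerSeries.coeff_mk]

lemma PhiDP : Phi * (Dser * Pser) = 1 :=
  TendsTo.unique (TendsTo.mul tends_go (TendsTo.mul tends_D tends_P)) tends_goDP

lemma obar_coeff (m : ℕ) : coeff m (Dser * Pser) = (obar m : R3) := by
  rw [PowerSeries.coeff_mul, Nat.sum_antidiagonal_eq_sum_range_succ_mk, obar_eq]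
  push_cast
  apply Finset.sum_congr rfl
  intro k _
  unfold Dser Pser
  rw [PowerSeries.coeff_mk, PowerSeries.coeff_mk]

lemma tcard_coeff (N : ℕ) :
    coeff N ((Dser * Pser) * (Dser * Pser)) = (Nat.card (TSet N) : R3) := by
  rw [PowerSeries.coeff_mul, Nat.sum_antidiagonal_eq_sum_range_succ_mk, tcard_eq]
  push_cast
  apply Finset.sum_congr rfl
  intro k _
  rw [obar_coeff, obar_coeff]

lemma sqc_mod (b : ℕ) (hb : b % 3 = 2) : sqc b = 0 := by
  unfold sqc
  rw [if_neg (by omega)]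
  by_cases h : (Nat.sqrt b) ^ 2 = b
  · exfalso
    set r := Nat.sqrt b
    have hmod := Nat.pow_mod r 2 3
    rw [h] at hmod
    have : r % 3 = 0 ∨ r % 3 = 1 ∨ r % 3 = 2 := by omega
    rcases this with h1 | h1 | h1 <;> rw [h1] at hmod <;> norm_num at hmod <;> omega
  · rw [if_neg h]

theorem main_card (n : ℕ) : 3 ∣ Nat.card (TSet (3 * n + 2)) := by
  set P : S := Dser * Pser with hP
  have h1 : Phi * P = 1 := PhiDP
  have h2 : P * P = (P ^ 3) * Phi := by
    calc P * P = (P * P) * (Phi * P) := by rw [h1, mul_one]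
      _ = (P ^ 3) * Phi := by ring
  have h3 : coeff (3 * n + 2) ((P ^ 3) * Phi) = 0 := by
    rw [PowerSeries.coeff_mul]
    apply Finset.sum_eq_zero
    rintro ⟨a, b⟩ hab
    rw [Finset.HasAntidiagonal.mem_antidiagonal] at hab
    by_cases h3a : 3 ∣ a
    · have hb : b % 3 = 2 := by omega
      have hPhi : coeff b Phi = sqc b := by
        unfold Phi
        rw [PowerSeries.coeff_mk]
      rw [hPhi, sqc_mod b hb, mul_zero]
    · rw [coeff_cube_eq_zero a h3a P, zero_mul]
  have h4 : ((Nat.card (TSet (3 * n + 2)) : ℕ) : R3) = 0 := by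
    rw [← tcard_coeff, ← hP, h2, h3]
  exact (ZMod.natCast_eq_zero_iff _ 3).mp h4


end OPC

theorem overpartition_pair_congruence (n : ℕ) :
    3 ∣ Nat.card {x : (Multiset ℕ × Finset ℕ) × (Multiset ℕ × Finset ℕ) //
      IsOverpartition x.1 ∧ IsOverpartition x.2 ∧ x.1.1.sum + x.2.1.sum = 3 * n + 2} :=
  OPC.main_card n
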